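/- Let $X$ be a separable Hilbert space with Borel probability measure $\nu$, with Sobolev spaces $W^{1,p}(X,\nu)$ as the domain of the closure $M_p$ of $R\nabla$ on $C^1_b(X)$. Then for every $\varphi \in W^{1,p}(X,\nu)$, the positive part $\varphi_+$, the negative part $\varphi_-$ and $|\varphi|$ belong to $W^{1,p}(X,\nu)$, and $M_p(\varphi_+) = \mathbb{1}_{\{\varphi>0\}} M_p\varphi$, $M_p(\varphi_-) = -\mathbb{1}_{\{\varphi<0\}} M_p\varphi$, $M_p(|\varphi|) = (\mathrm{sign}\,\varphi)\, M_p\varphi$. In particular, $M_p\varphi$ vanishes $\nu$-a.e. on each level set $\varphi^{-1}(c)$, $c \in \mathbb{R}$. -/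

import Mathlib

open MeasureTheory Filter
open scoped ENNReal Topology RealInnerProductSpace

noncomputable section

variable {X : Type*} [NormedAddCommGroup X] [InnerProductSpace ℝ X] [CompleteSpace X]
  [MeasurableSpace X] [BorelSpace X]

section ENNRealHelpers

variable {α : Type*} [MeasurableSpace α] {μ : Measure α} {p : ℝ≥0∞}

lemma tendsto_eLpNorm_zero_iff {E : Type*} [NormedAddCommGroup E]
    (hp0 : p ≠ 0) (hp' : p ≠ ∞) (f : ℕ → α → E) :
    Tendsto (fun n => eLpNorm (f n) p μ) atTop (𝓝 0) ↔
      Tendsto (fun n => ∫⁻ x, (‖f n x‖₊ : ℝ≥0∞) ^ p.toReal ∂μ) atTop (𝓝 0) := by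
  have hq : 0 < p.toReal := ENNReal.toReal_pos hp0 hp'
  constructor
  · intro h
    have h2 := Filter.Tendsto.ennrpow_const p.toReal h
    rw [ENNReal.zero_rpow_of_pos hq] at h2
    refine h2.congr fun n => ?_
    simp only [eLpNorm_eq_lintegral_rpow_enorm_toReal hp0 hp', enorm_eq_nnnorm]
    rw [← ENNReal.rpow_mul, one_div,
      inv_mul_cancel₀ hq.ne', ENNReal.rpow_one]
  · intro h
    have h2 := Filter.Tendsto.ennrpow_const (1 / p.toReal) h
    rw [ENNReal.zero_rpow_of_pos (by positivity)] at h2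
    refine h2.congr fun n => ?_
    simp only [eLpNorm_eq_lintegral_rpow_enorm_toReal hp0 hp', enorm_eq_nnnorm]

lemma tendsto_eLpNorm_zero_of_le
    {E D V : Type*} [NormedAddCommGroup E] [NormedAddCommGroup D] [NormedAddCommGroup V]
    (hp0 : p ≠ 0) (hp' : p ≠ ∞)
    {f : ℕ → α → E} {d : ℕ → α → D} {v : ℕ → α → V}
    (hv : ∀ n, AEStronglyMeasurable (v n) μ) {L : ℝ} (hL : 0 ≤ L)
    (hpt : ∀ n x, ‖f n x‖ ≤ L * ‖d n x‖ + ‖v n x‖)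
    (hd : Tendsto (fun n => eLpNorm (d n) p μ) atTop (𝓝 0))
    (hvt : Tendsto (fun n => eLpNorm (v n) p μ) atTop (𝓝 0)) :
    Tendsto (fun n => eLpNorm (f n) p μ) atTop (𝓝 0) := by
  have hq : 0 < p.toReal := ENNReal.toReal_pos hp0 hp'
  set q := p.toReal with hqdef
  rw [tendsto_eLpNorm_zero_iff hp0 hp'] at hd hvt ⊢
  set oL := ENNReal.ofReal L with hoL
  have hoLne : oL ^ q ≠ ∞ := ENNReal.rpow_ne_top_of_nonneg hq.le ENNReal.ofReal_ne_top
  have h2ne : (2 : ℝ≥0∞) ^ q ≠ ∞ := ENNReal.rpow_ne_top_of_nonneg hq.le ENNReal.ofNat_ne_top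
  have key : ∀ a b : ℝ≥0∞, (a + b) ^ q ≤ 2 ^ q * (a ^ q + b ^ q) := by
    intro a b
    have h1 : a + b ≤ 2 * max a b := by
      rw [two_mul]; exact add_le_add (le_max_left a b) (le_max_right a b)
    calc (a + b) ^ q ≤ (2 * max a b) ^ q := ENNReal.rpow_le_rpow h1 hq.le
      _ = 2 ^ q * (max a b) ^ q := ENNReal.mul_rpow_of_nonneg _ _ hq.le
      _ ≤ 2 ^ q * (a ^ q + b ^ q) := by
          refine mul_le_mul_right ?_ _
          rcases le_total a b with h | h
          · rw [max_eq_right h]; exact le_add_self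
          · rw [max_eq_left h]; exact self_le_add_right _ _
  have hptE : ∀ n x, (‖f n x‖₊ : ℝ≥0∞) ^ q ≤
      2 ^ q * (oL ^ q * (‖d n x‖₊ : ℝ≥0∞) ^ q + (‖v n x‖₊ : ℝ≥0∞) ^ q) := by
    intro n x
    have hle : (‖f n x‖₊ : ℝ≥0∞) ≤ oL * ‖d n x‖₊ + ‖v n x‖₊ := by
      calc (‖f n x‖₊ : ℝ≥0∞) = ENNReal.ofReal ‖f n x‖ := (ofReal_norm _).symm
        _ ≤ ENNReal.ofReal (L * ‖d n x‖ + ‖v n x‖) := ENNReal.ofReal_le_ofReal (hpt n x)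
        _ = ENNReal.ofReal (L * ‖d n x‖) + ENNReal.ofReal ‖v n x‖ :=
            ENNReal.ofReal_add (by positivity) (norm_nonneg _)
        _ = oL * ‖d n x‖₊ + ‖v n x‖₊ := by
            rw [ENNReal.ofReal_mul hL, ofReal_norm, ofReal_norm, enorm_eq_nnnorm, enorm_eq_nnnorm]
    calc (‖f n x‖₊ : ℝ≥0∞) ^ q ≤ (oL * ‖d n x‖₊ + ‖v n x‖₊) ^ q :=
        ENNReal.rpow_le_rpow hle hq.le
      _ ≤ 2 ^ q * ((oL * ‖d n x‖₊) ^ q + (‖v n x‖₊ : ℝ≥0∞) ^ q) := key _ _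
      _ = 2 ^ q * (oL ^ q * (‖d n x‖₊ : ℝ≥0∞) ^ q + (‖v n x‖₊ : ℝ≥0∞) ^ q) := by
          rw [ENNReal.mul_rpow_of_nonneg _ _ hq.le]
  have hvmeas : ∀ n, AEMeasurable (fun x => (‖v n x‖₊ : ℝ≥0∞) ^ q) μ := fun n =>
    ENNReal.continuous_rpow_const.measurable.comp_aemeasurable (hv n).enorm
  have hbound : ∀ n, ∫⁻ x, (‖f n x‖₊ : ℝ≥0∞) ^ q ∂μ ≤
      2 ^ q * (oL ^ q * ∫⁻ x, (‖d n x‖₊ : ℝ≥0∞) ^ q ∂μ + ∫⁻ x, (‖v n x‖₊ : ℝ≥0∞) ^ q ∂μ) := by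
    intro n
    calc ∫⁻ x, (‖f n x‖₊ : ℝ≥0∞) ^ q ∂μ
        ≤ ∫⁻ x, 2 ^ q * (oL ^ q * (‖d n x‖₊ : ℝ≥0∞) ^ q + (‖v n x‖₊ : ℝ≥0∞) ^ q) ∂μ :=
          lintegral_mono (hptE n)
      _ = 2 ^ q * ∫⁻ x, (oL ^ q * (‖d n x‖₊ : ℝ≥0∞) ^ q + (‖v n x‖₊ : ℝ≥0∞) ^ q) ∂μ :=
          lintegral_const_mul' _ _ h2ne
      _ = 2 ^ q * (∫⁻ x, oL ^ q * (‖d n x‖₊ : ℝ≥0∞) ^ q ∂μ + ∫⁻ x, (‖v n x‖₊ : ℝ≥0∞) ^ q ∂μ) := by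
          rw [lintegral_add_right' _ (hvmeas n)]
      _ = 2 ^ q * (oL ^ q * ∫⁻ x, (‖d n x‖₊ : ℝ≥0∞) ^ q ∂μ + ∫⁻ x, (‖v n x‖₊ : ℝ≥0∞) ^ q ∂μ) := by
          rw [lintegral_const_mul' _ _ hoLne]
  have hlim : Tendsto (fun n => 2 ^ q *
      (oL ^ q * ∫⁻ x, (‖d n x‖₊ : ℝ≥0∞) ^ q ∂μ + ∫⁻ x, (‖v n x‖₊ : ℝ≥0∞) ^ q ∂μ))
      atTop (𝓝 0) := by
    have h1 := ENNReal.Tendsto.const_mul hd (Or.inr hoLne)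
    rw [mul_zero] at h1
    have h2 := h1.add hvt
    rw [add_zero] at h2
    have h3 := ENNReal.Tendsto.const_mul h2 (Or.inr h2ne)
    rwa [mul_zero] at h3
  exact tendsto_of_tendsto_of_tendsto_of_le_of_le tendsto_const_nhds hlim
    (fun n => zero_le) hbound

end ENNRealHelpers

/-- Smooth approximation of the positive part. -/
def Fe (ε t : ℝ) : ℝ := (max t 0) ^ 2 / (max t 0 + ε)

/-- Its derivative. -/
def De (ε t : ℝ) : ℝ := ((max t 0) ^ 2 + 2 * ε * (max t 0)) / (max t 0 + ε) ^ 2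

lemma Fe_hasDerivAt {ε : ℝ} (hε : 0 < ε) (t : ℝ) : HasDerivAt (Fe ε) (De ε t) t := by
  rcases lt_trichotomy t 0 with ht | rfl | ht
  · have h0 : HasDerivAt (fun _ : ℝ => (0 : ℝ)) 0 t := hasDerivAt_const t 0
    have he : Fe ε =ᶠ[𝓝 t] fun _ => (0 : ℝ) := by
      filter_upwards [Iio_mem_nhds ht] with s hs
      simp [Fe, max_eq_right (le_of_lt (Set.mem_Iio.1 hs))]
    have hDe : De ε t = 0 := by simp [De, max_eq_right ht.le]
    rw [hDe]
    exact h0.congr_of_eventuallyEq he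
  · have hDe : De ε 0 = 0 := by simp [De]
    rw [hDe, hasDerivAt_iff_isLittleO]
    have hFe0 : Fe ε 0 = 0 := by simp [Fe]
    simp only [hFe0, sub_zero, smul_zero]
    rw [Asymptotics.isLittleO_iff]
    intro c hc
    have hball : ∀ᶠ s : ℝ in 𝓝 0, |s| < c * ε := by
      filter_upwards [Metric.ball_mem_nhds (0 : ℝ) (by positivity : (0:ℝ) < c * ε)] with s hs
      simpa [Real.dist_eq] using hs
    filter_upwards [hball] with s hs
    have h1 : 0 ≤ max s 0 := le_max_right _ _
    have h2 : max s 0 ≤ |s| := max_le (le_abs_self s) (abs_nonneg s)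
    have hden : 0 < max s 0 + ε := by linarith
    have hFnn : 0 ≤ Fe ε s := div_nonneg (by positivity) hden.le
    have hFle : Fe ε s ≤ |s| * |s| / ε := by
      rw [Fe]
      apply div_le_div₀ (by positivity) _ hε (by linarith)
      calc (max s 0) ^ 2 ≤ |s| ^ 2 := by nlinarith
        _ = |s| * |s| := by ring
    rw [Real.norm_eq_abs, Real.norm_eq_abs, abs_of_nonneg hFnn]
    calc Fe ε s ≤ |s| * |s| / ε := hFle
      _ = |s| / ε * |s| := by ring
      _ ≤ c * |s| := by
          apply mul_le_mul_of_nonneg_right _ (abs_nonneg s)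
          rw [div_le_iff₀ hε]
          nlinarith [abs_nonneg s]
  · have he : Fe ε =ᶠ[𝓝 t] fun s => s ^ 2 / (s + ε) := by
      filter_upwards [Ioi_mem_nhds ht] with s hs
      simp [Fe, max_eq_left (le_of_lt (Set.mem_Ioi.1 hs))]
    have h1 : HasDerivAt (fun s : ℝ => s ^ 2) (2 * t) t := by
      simpa using hasDerivAt_pow 2 t
    have h2 : HasDerivAt (fun s : ℝ => s + ε) 1 t := (hasDerivAt_id t).add_const ε
    have hd := h1.div h2 (by positivity)
    have hval : De ε t = (2 * t * (t + ε) - t ^ 2 * 1) / (t + ε) ^ 2 := by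
      rw [De, max_eq_left ht.le, div_eq_div_iff (by positivity) (by positivity)]
      ring
    rw [hval]
    exact hd.congr_of_eventuallyEq he

lemma De_continuous {ε : ℝ} (hε : 0 < ε) : Continuous (De ε) := by
  have hm : Continuous fun t : ℝ => max t 0 := continuous_id.max continuous_const
  apply Continuous.div ((hm.pow 2).add (continuous_const.mul hm)) ((hm.add continuous_const).pow 2)
  intro t
  have h0 : 0 ≤ max t 0 := le_max_right _ _
  exact pow_ne_zero 2 (ne_of_gt (show (0:ℝ) < max t 0 + ε by linarith))

lemma De_nonneg {ε : ℝ} (hε : 0 < ε) (t : ℝ) : 0 ≤ De ε t := by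
  have h0 : 0 ≤ max t 0 := le_max_right _ _
  exact div_nonneg (by positivity) (by positivity)

lemma De_le_one {ε : ℝ} (hε : 0 < ε) (t : ℝ) : De ε t ≤ 1 := by
  have h0 : 0 ≤ max t 0 := le_max_right _ _
  rw [De, div_le_one (by positivity)]
  nlinarith [sq_nonneg ε]

lemma De_abs_le {ε : ℝ} (hε : 0 < ε) (t : ℝ) : |De ε t| ≤ 1 :=
  abs_le.2 ⟨by linarith [De_nonneg hε t], De_le_one hε t⟩

lemma Fe_approx {ε : ℝ} (hε : 0 < ε) (t : ℝ) : |Fe ε t - max t 0| ≤ ε := by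
  have h0 : 0 ≤ max t 0 := le_max_right _ _
  have hden : 0 < max t 0 + ε := by linarith
  have heq : Fe ε t - max t 0 = -(ε * max t 0) / (max t 0 + ε) := by
    rw [Fe]; field_simp; ring
  rw [heq, abs_div, abs_neg, abs_of_nonneg (by positivity : 0 ≤ ε * max t 0),
    abs_of_pos hden, div_le_iff₀ hden]
  nlinarith

lemma De_tendsto {t : ℝ} {e : ℕ → ℝ} (he : ∀ k, 0 < e k) (helim : Tendsto e atTop (𝓝 0)) :
    Tendsto (fun k => De (e k) t) atTop (𝓝 (if 0 < t then 1 else 0)) := by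
  rcases le_or_gt t 0 with ht | ht
  · rw [if_neg (not_lt.2 ht)]
    have hz : ∀ k, De (e k) t = 0 := by
      intro k; simp [De, max_eq_right ht]
    simpa only [hz] using (tendsto_const_nhds : Tendsto (fun _ : ℕ => (0:ℝ)) atTop (𝓝 0))
  · rw [if_pos ht]
    have hDe : ∀ k, De (e k) t = (t ^ 2 + 2 * (e k) * t) / (t + e k) ^ 2 := by
      intro k; rw [De, max_eq_left ht.le]
    simp only [hDe]
    have h1 : Tendsto (fun k => t ^ 2 + 2 * e k * t) atTop (𝓝 (t ^ 2 + 2 * 0 * t)) :=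
      tendsto_const_nhds.add ((helim.const_mul 2).mul_const t)
    have h2 : Tendsto (fun k => (t + e k) ^ 2) atTop (𝓝 ((t + 0) ^ 2)) :=
      (tendsto_const_nhds.add helim).pow 2
    have h3 := h1.div h2 (by simpa using pow_ne_zero 2 ht.ne')
    have h4 : (t ^ 2 + 2 * 0 * t) / (t + 0) ^ 2 = 1 := by
      rw [mul_zero, zero_mul, add_zero, add_zero]
      exact div_self (pow_ne_zero 2 ht.ne')
    rwa [h4] at h3

/-- `f ∈ C¹_b(X)`: bounded, continuously Fréchet differentiable, with bounded gradient. -/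
def C1b (f : X → ℝ) : Prop :=
  ContDiff ℝ 1 f ∧ (∃ C, ∀ x, |f x| ≤ C) ∧ (∃ C, ∀ x, ‖gradient f x‖ ≤ C)

/-- `f ∈ W^{1,p}(X,ν)` with `M_p f = G`, where `M_p` is the closure of `R∇` defined on
`C¹_b(X)`. -/
def IsSobolevPair (R : X →L[ℝ] X) (ν : Measure X) (p : ℝ≥0∞)
    (f : X → ℝ) (G : X → X) : Prop :=
  MemLp f p ν ∧ MemLp G p ν ∧
    ∃ fn : ℕ → X → ℝ, (∀ n, C1b (fn n)) ∧
      Tendsto (fun n => eLpNorm (fun x => fn n x - f x) p ν) atTop (𝓝 0) ∧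
      Tendsto (fun n => eLpNorm (fun x => R (gradient (fn n) x) - G x) p ν) atTop (𝓝 0)

lemma hasGradientAt_comp_real {f : X → ℝ} {x : X} {g : X} (hf : HasGradientAt f g x)
    {F : ℝ → ℝ} {d : ℝ} (hF : HasDerivAt F d (f x)) :
    HasGradientAt (fun y => F (f y)) (d • g) x := by
  have h1 : HasFDerivAt f (InnerProductSpace.toDual ℝ X g) x := hf
  have h2 : HasFDerivAt F (ContinuousLinearMap.smulRight (1 : ℝ →L[ℝ] ℝ) d) (f x) :=
    hF.hasFDerivAt
  have h3 := h2.comp x h1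
  have heq : (ContinuousLinearMap.smulRight (1 : ℝ →L[ℝ] ℝ) d).comp
      (InnerProductSpace.toDual ℝ X g) = InnerProductSpace.toDual ℝ X (d • g) := by
    apply ContinuousLinearMap.ext; intro v
    simp [real_inner_smul_left, smul_eq_mul, mul_comm]
  rw [heq] at h3
  exact h3

lemma deriv_bound_lipschitz {F D : ℝ → ℝ} (hFd : ∀ t, HasDerivAt F (D t) t) {L : ℝ}
    (hL : ∀ t, |D t| ≤ L) (a b : ℝ) : |F a - F b| ≤ L * |a - b| := by
  have h := convex_univ.norm_image_sub_le_of_norm_hasDerivWithin_le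
    (fun t _ => (hFd t).hasDerivWithinAt)
    (fun t _ => by simpa [Real.norm_eq_abs] using hL t) (Set.mem_univ b) (Set.mem_univ a)
  simpa [Real.norm_eq_abs] using h

lemma C1b_comp {f : X → ℝ} (hf : C1b f) {F D : ℝ → ℝ} (hFd : ∀ t, HasDerivAt F (D t) t)
    (hDc : Continuous D) {L B : ℝ} (hL : ∀ t, |D t| ≤ L) (hFb : ∀ t, |F t| ≤ L * |t| + B) :
    C1b (fun x => F (f x)) ∧
      ∀ x, gradient (fun y => F (f y)) x = D (f x) • gradient f x := by
  have hL0 : 0 ≤ L := le_trans (abs_nonneg _) (hL 0)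
  have hFc : ContDiff ℝ 1 F := contDiff_one_iff_deriv.mpr
    ⟨fun t => (hFd t).differentiableAt,
      by rw [show deriv F = D from funext fun t => (hFd t).deriv]; exact hDc⟩
  have hgrad : ∀ x, HasGradientAt (fun y => F (f y)) (D (f x) • gradient f x) x := fun x =>
    hasGradientAt_comp_real ((hf.1.differentiable one_ne_zero x).hasGradientAt) (hFd (f x))
  refine ⟨⟨hFc.comp hf.1, ?_, ?_⟩, fun x => (hgrad x).gradient⟩
  · obtain ⟨C, hC⟩ := hf.2.1
    refine ⟨L * C + B, fun x => le_trans (hFb (f x)) ?_⟩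
    have h1 : |f x| ≤ C := hC x
    nlinarith [abs_nonneg (f x)]
  · obtain ⟨C, hC⟩ := hf.2.2
    refine ⟨L * C, fun x => ?_⟩
    rw [(hgrad x).gradient, norm_smul, Real.norm_eq_abs]
    exact mul_le_mul (hL _) (hC x) (norm_nonneg _) hL0
lemma tendsto_eLpNorm_smul_zero {ν : Measure X} {p : ℝ≥0∞} (hp0 : p ≠ 0) (hp' : p ≠ ∞)
    {G : X → X} (hG : MemLp G p ν) {a : ℕ → X → ℝ} (ha : ∀ k, AEStronglyMeasurable (a k) ν)
    {M : ℝ} (hab : ∀ k x, |a k x| ≤ M)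
    (halim : ∀ᵐ x ∂ν, Tendsto (fun k => a k x) atTop (𝓝 0)) :
    Tendsto (fun k => eLpNorm (fun x => a k x • G x) p ν) atTop (𝓝 0) := by
  rw [tendsto_eLpNorm_zero_iff hp0 hp']
  have hq : 0 < p.toReal := ENNReal.toReal_pos hp0 hp'
  have hM0 : 0 ≤ M := le_trans (abs_nonneg _) (hab 0 0)
  have hfin : ∫⁻ x, (‖M • G x‖₊ : ℝ≥0∞) ^ p.toReal ∂ν ≠ ∞ := by
    have h1 : MemLp (M • G) p ν := hG.const_smul M
    have h2 := lintegral_rpow_enorm_lt_top_of_eLpNorm_lt_top hp0 hp' h1.2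
    exact ne_of_lt h2
  have hconv := tendsto_lintegral_of_dominated_convergence' (μ := ν)
      (F := fun k x => (‖a k x • G x‖₊ : ℝ≥0∞) ^ p.toReal) (f := fun _ => 0)
      (fun x => (‖M • G x‖₊ : ℝ≥0∞) ^ p.toReal)
      (fun k => ENNReal.continuous_rpow_const.measurable.comp_aemeasurable
        (((ha k).smul hG.1).enorm))
      (fun k => Filter.Eventually.of_forall fun x => ?_) hfin ?_
  · simpa using hconv
  · refine ENNReal.rpow_le_rpow ?_ hq.le
    rw [← enorm_eq_nnnorm, ← enorm_eq_nnnorm, ← ofReal_norm, ← ofReal_norm]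
    apply ENNReal.ofReal_le_ofReal
    rw [norm_smul, norm_smul, Real.norm_eq_abs, Real.norm_eq_abs]
    exact mul_le_mul_of_nonneg_right (le_trans (hab k x) (le_abs_self M)) (norm_nonneg _)
  · filter_upwards [halim] with x hx
    have h1 : Tendsto (fun k => a k x • G x) atTop (𝓝 ((0:ℝ) • G x)) := hx.smul_const (G x)
    rw [zero_smul] at h1
    have h2 : Tendsto (fun v : X => (‖v‖₊ : ℝ≥0∞) ^ p.toReal) (𝓝 0) (𝓝 ((‖(0:X)‖₊ : ℝ≥0∞) ^ p.toReal)) :=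
      (ENNReal.continuous_rpow_const.comp (ENNReal.continuous_coe.comp continuous_nnnorm)).tendsto 0
    have h3 := h2.comp h1
    simpa [Function.comp_def, ENNReal.zero_rpow_of_pos hq] using h3

lemma master (R : X →L[ℝ] X) (ν : Measure X) [IsProbabilityMeasure ν]
    {p : ℝ≥0∞} (hp : 1 < p) (hp' : p ≠ ∞)
    {φ : X → ℝ} {G : X → X} (hφ : IsSobolevPair R ν p φ G)
    (Fk Dk : ℕ → ℝ → ℝ) (limF limD : ℝ → ℝ) {L : ℝ} (hL1 : 1 ≤ L) (c : ℕ → ℝ)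
    (hFd : ∀ k t, HasDerivAt (Fk k) (Dk k t) t)
    (hDc : ∀ k, Continuous (Dk k))
    (hDL : ∀ k t, |Dk k t| ≤ L)
    (hlimDL : ∀ t, |limD t| ≤ L)
    (hlimF_cont : Continuous limF)
    (hlimF_bound : ∀ t, |limF t| ≤ L * |t|)
    (hc0 : Tendsto c atTop (𝓝 0))
    (happrox : ∀ k t, |Fk k t - limF t| ≤ c k)
    (hDlim : ∀ t, Tendsto (fun k => Dk k t) atTop (𝓝 (limD t))) :
    IsSobolevPair R ν p (fun x => limF (φ x)) (fun x => limD (φ x) • G x) := by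
  obtain ⟨hφ1, hφ2, fn, hfnC, hfn_conv, hgrad_conv⟩ := hφ
  have hp0 : p ≠ 0 := (lt_trans zero_lt_one hp).ne'
  have hL0 : 0 ≤ L := le_trans zero_le_one hL1
  have hq : 0 < p.toReal := ENNReal.toReal_pos hp0 hp'
  have hφm : AEStronglyMeasurable φ ν := hφ1.1
  have hGm : AEStronglyMeasurable G ν := hφ2.1
  have hfnm : ∀ n, AEStronglyMeasurable (fn n) ν := fun n =>
    ((hfnC n).1.continuous).aestronglyMeasurable
  have hlimDmeas : Measurable limD :=
    measurable_of_tendsto_metrizable (fun k => (hDc k).measurable) (tendsto_pi_nhds.2 hDlim)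
  have hlimDφ : AEStronglyMeasurable (fun x => limD (φ x)) ν :=
    (hlimDmeas.comp_aemeasurable hφm.aemeasurable).aestronglyMeasurable
  have hFkcont : ∀ k, Continuous (Fk k) :=
    fun k => Differentiable.continuous (fun t => (hFd k t).differentiableAt)
  -- membership of targets
  have memF : MemLp (fun x => limF (φ x)) p ν := by
    refine MemLp.of_le (hφ1.const_mul L) (hlimF_cont.comp_aestronglyMeasurable hφm)
      (Filter.Eventually.of_forall fun x => ?_)
    rw [Real.norm_eq_abs, Real.norm_eq_abs, abs_mul]
    exact le_trans (hlimF_bound (φ x)) (mul_le_mul_of_nonneg_right (le_abs_self L) (abs_nonneg _))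
  have memG2 : MemLp (fun x => limD (φ x) • G x) p ν := by
    refine MemLp.of_le (hφ2.const_smul L) (hlimDφ.smul hGm)
      (Filter.Eventually.of_forall fun x => ?_)
    rw [Pi.smul_apply, norm_smul, norm_smul, Real.norm_eq_abs, Real.norm_eq_abs]
    exact mul_le_mul_of_nonneg_right (le_trans (hlimDL (φ x)) (le_abs_self L)) (norm_nonneg _)
  -- a.e. convergent subsequence
  have htim : TendstoInMeasure ν fn atTop φ :=
    tendstoInMeasure_of_tendsto_eLpNorm_of_ne_top hp0 hp' hfnm hφm hfn_conv
  obtain ⟨ns, hns_mono, hns_ae⟩ := htim.exists_seq_tendsto_ae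
  have hfn_conv' : Tendsto (fun m => eLpNorm (fun x => fn (ns m) x - φ x) p ν) atTop (𝓝 0) :=
    hfn_conv.comp hns_mono.tendsto_atTop
  have hgrad_conv' :
      Tendsto (fun m => eLpNorm (fun x => R (gradient (fn (ns m)) x) - G x) p ν) atTop (𝓝 0) :=
    hgrad_conv.comp hns_mono.tendsto_atTop
  -- composition data
  have hFkb : ∀ k t, |Fk k t| ≤ L * |t| + c k := by
    intro k t
    have h1 := happrox k t
    have h2 := hlimF_bound t
    have h3 := abs_sub_abs_le_abs_sub (Fk k t) (limF t)
    linarith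
  have hcomp : ∀ k n, C1b (fun x => Fk k (fn n x)) ∧
      ∀ x, gradient (fun y => Fk k (fn n y)) x = Dk k (fn n x) • gradient (fn n) x :=
    fun k n => C1b_comp (hfnC n) (hFd k) (hDc k) (hDL k) (hFkb k)
  -- step A
  have stepA : ∀ k,
      Tendsto (fun m => eLpNorm (fun x => Fk k (fn (ns m) x) - Fk k (φ x)) p ν) atTop (𝓝 0) := by
    intro k
    refine tendsto_eLpNorm_zero_of_le hp0 hp' (v := fun (_ : ℕ) (_ : X) => (0 : ℝ))
      (fun _ => aestronglyMeasurable_const) hL0 ?_ hfn_conv' ?_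
    · intro m x
      rw [norm_zero, add_zero, Real.norm_eq_abs, Real.norm_eq_abs]
      exact deriv_bound_lipschitz (hFd k) (hDL k) _ _
    · simpa only [eLpNorm_zero'] using (tendsto_const_nhds : Tendsto (fun _ : ℕ => (0:ℝ≥0∞)) atTop (𝓝 0))
  -- step B
  have stepB : ∀ k, Tendsto (fun m => eLpNorm
      (fun x => R (gradient (fun y => Fk k (fn (ns m) y)) x) - Dk k (φ x) • G x) p ν)
      atTop (𝓝 0) := by
    intro k
    have hvlim : Tendsto
        (fun m => eLpNorm (fun x => (Dk k (fn (ns m) x) - Dk k (φ x)) • G x) p ν) atTop (𝓝 0) := by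
      refine tendsto_eLpNorm_smul_zero hp0 hp' hφ2 (M := 2 * L)
        (fun m => (((hDc k).comp_aestronglyMeasurable (hfnm _)).sub
          ((hDc k).comp_aestronglyMeasurable hφm))) ?_ ?_
      · intro m x
        have h1 := hDL k (fn (ns m) x)
        have h2 := hDL k (φ x)
        have h3 : |Dk k (fn (ns m) x) - Dk k (φ x)| ≤ |Dk k (fn (ns m) x)| + |Dk k (φ x)| := by
          simpa [Real.norm_eq_abs] using norm_sub_le (Dk k (fn (ns m) x)) (Dk k (φ x))
        linarith
      · filter_upwards [hns_ae] with x hx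
        have h1 : Tendsto (fun m => Dk k (fn (ns m) x)) atTop (𝓝 (Dk k (φ x))) :=
          ((hDc k).tendsto _).comp hx
        simpa using h1.sub_const (Dk k (φ x))
    refine tendsto_eLpNorm_zero_of_le hp0 hp'
      (d := fun m x => R (gradient (fn (ns m)) x) - G x)
      (v := fun m x => (Dk k (fn (ns m) x) - Dk k (φ x)) • G x)
      (fun m => ((((hDc k).comp_aestronglyMeasurable (hfnm _)).sub
        ((hDc k).comp_aestronglyMeasurable hφm)).smul hGm)) hL0 ?_ hgrad_conv' hvlim
    intro m x
    have hgr := (hcomp k (ns m)).2 x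
    rw [hgr, R.map_smul]
    have hid : Dk k (fn (ns m) x) • R (gradient (fn (ns m)) x) - Dk k (φ x) • G x
        = Dk k (fn (ns m) x) • (R (gradient (fn (ns m)) x) - G x)
          + (Dk k (fn (ns m) x) - Dk k (φ x)) • G x := by
      rw [smul_sub, sub_smul]; abel
    rw [hid]
    refine le_trans (norm_add_le _ _) (add_le_add_left ?_ _)
    rw [norm_smul, Real.norm_eq_abs]
    exact mul_le_mul_of_nonneg_right (hDL k _) (norm_nonneg _)
  -- diagonal choice
  have hchoice : ∀ k : ℕ, ∃ m,
      eLpNorm (fun x => Fk k (fn (ns m) x) - Fk k (φ x)) p ν < (k : ℝ≥0∞)⁻¹ ∧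
      eLpNorm (fun x => R (gradient (fun y => Fk k (fn (ns m) y)) x) - Dk k (φ x) • G x) p ν
        < (k : ℝ≥0∞)⁻¹ := by
    intro k
    have hpos : (0 : ℝ≥0∞) < (k : ℝ≥0∞)⁻¹ := ENNReal.inv_pos.2 (ENNReal.natCast_ne_top k)
    exact (((stepA k).eventually_lt_const hpos).and ((stepB k).eventually_lt_const hpos)).exists
  choose M hM1 hM2 using hchoice
  refine ⟨memF, memG2, fun k x => Fk k (fn (ns (M k)) x), fun k => (hcomp k (ns (M k))).1, ?_, ?_⟩
  · -- convergence of functions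
    have hd : Tendsto (fun k => eLpNorm (fun x => Fk k (fn (ns (M k)) x) - Fk k (φ x)) p ν)
        atTop (𝓝 0) :=
      tendsto_of_tendsto_of_tendsto_of_le_of_le tendsto_const_nhds
        ENNReal.tendsto_inv_nat_nhds_zero (fun k => zero_le) (fun k => (hM1 k).le)
    have hv : Tendsto (fun k => eLpNorm (fun x => Fk k (φ x) - limF (φ x)) p ν) atTop (𝓝 0) := by
      have hub : ∀ k, eLpNorm (fun x => Fk k (φ x) - limF (φ x)) p ν ≤ (‖c k‖₊ : ℝ≥0∞) := by
        intro k
        calc eLpNorm (fun x => Fk k (φ x) - limF (φ x)) p ν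
            ≤ eLpNorm (fun _ : X => c k) p ν := eLpNorm_mono_real fun x => by
              rw [Real.norm_eq_abs]; exact happrox k (φ x)
          _ = (‖c k‖₊ : ℝ≥0∞) * (ν Set.univ) ^ (1 / p.toReal) :=
              eLpNorm_const _ hp0 (IsProbabilityMeasure.ne_zero ν)
          _ = (‖c k‖₊ : ℝ≥0∞) := by simp [measure_univ]
      have hcn : Tendsto (fun k => (‖c k‖₊ : ℝ≥0∞)) atTop (𝓝 0) := by
        have h2 : Tendsto (fun k => ‖c k‖₊) atTop (𝓝 ‖(0:ℝ)‖₊) :=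
          (continuous_nnnorm.tendsto (0:ℝ)).comp hc0
        rw [nnnorm_zero] at h2
        exact ENNReal.tendsto_coe.2 h2
      exact tendsto_of_tendsto_of_tendsto_of_le_of_le tendsto_const_nhds hcn
        (fun k => zero_le) hub
    refine tendsto_eLpNorm_zero_of_le hp0 hp'
      (d := fun k x => Fk k (fn (ns (M k)) x) - Fk k (φ x))
      (v := fun k x => Fk k (φ x) - limF (φ x))
      (fun k => (((hFkcont k).comp_aestronglyMeasurable hφm).sub
        (hlimF_cont.comp_aestronglyMeasurable hφm))) hL0 ?_ hd hv
    intro k x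
    have hid : Fk k (fn (ns (M k)) x) - limF (φ x)
        = (Fk k (fn (ns (M k)) x) - Fk k (φ x)) + (Fk k (φ x) - limF (φ x)) := by abel
    rw [hid]
    refine le_trans (norm_add_le _ _) (add_le_add_left ?_ _)
    calc ‖Fk k (fn (ns (M k)) x) - Fk k (φ x)‖ = 1 * ‖Fk k (fn (ns (M k)) x) - Fk k (φ x)‖ :=
        (one_mul _).symm
      _ ≤ L * ‖Fk k (fn (ns (M k)) x) - Fk k (φ x)‖ :=
        mul_le_mul_of_nonneg_right hL1 (norm_nonneg _)
  · -- convergence of gradients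
    have hd : Tendsto (fun k => eLpNorm (fun x =>
        R (gradient (fun y => Fk k (fn (ns (M k)) y)) x) - Dk k (φ x) • G x) p ν) atTop (𝓝 0) :=
      tendsto_of_tendsto_of_tendsto_of_le_of_le tendsto_const_nhds
        ENNReal.tendsto_inv_nat_nhds_zero (fun k => zero_le) (fun k => (hM2 k).le)
    have hv : Tendsto (fun k => eLpNorm (fun x => (Dk k (φ x) - limD (φ x)) • G x) p ν)
        atTop (𝓝 0) := by
      refine tendsto_eLpNorm_smul_zero hp0 hp' hφ2 (M := 2 * L)
        (fun k => (((hDc k).comp_aestronglyMeasurable hφm).sub hlimDφ)) ?_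
        (Filter.Eventually.of_forall fun x => ?_)
      · intro k x
        have h1 := hDL k (φ x)
        have h2 := hlimDL (φ x)
        have h3 : |Dk k (φ x) - limD (φ x)| ≤ |Dk k (φ x)| + |limD (φ x)| := by
          simpa [Real.norm_eq_abs] using norm_sub_le (Dk k (φ x)) (limD (φ x))
        linarith
      · simpa using (hDlim (φ x)).sub_const (limD (φ x))
    refine tendsto_eLpNorm_zero_of_le hp0 hp'
      (d := fun k x => R (gradient (fun y => Fk k (fn (ns (M k)) y)) x) - Dk k (φ x) • G x)
      (v := fun k x => (Dk k (φ x) - limD (φ x)) • G x)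
      (fun k => ((((hDc k).comp_aestronglyMeasurable hφm).sub hlimDφ).smul hGm)) hL0 ?_ hd hv
    intro k x
    have hid : R (gradient (fun y => Fk k (fn (ns (M k)) y)) x) - limD (φ x) • G x
        = (R (gradient (fun y => Fk k (fn (ns (M k)) y)) x) - Dk k (φ x) • G x)
          + (Dk k (φ x) - limD (φ x)) • G x := by
      rw [sub_smul]; abel
    rw [hid]
    refine le_trans (norm_add_le _ _) (add_le_add_left ?_ _)
    calc ‖R (gradient (fun y => Fk k (fn (ns (M k)) y)) x) - Dk k (φ x) • G x‖
        = 1 * ‖R (gradient (fun y => Fk k (fn (ns (M k)) y)) x) - Dk k (φ x) • G x‖ :=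
        (one_mul _).symm
      _ ≤ L * ‖R (gradient (fun y => Fk k (fn (ns (M k)) y)) x) - Dk k (φ x) • G x‖ :=
        mul_le_mul_of_nonneg_right hL1 (norm_nonneg _)

lemma FeNeg_hasDerivAt {ε : ℝ} (hε : 0 < ε) (t : ℝ) :
    HasDerivAt (fun s : ℝ => Fe ε (-s)) (-De ε (-t)) t := by
  have h : HasDerivAt (fun s : ℝ => Fe ε (-s)) (De ε (-t) * (-1)) t :=
    HasDerivAt.comp t (Fe_hasDerivAt hε (-t)) (hasDerivAt_neg t)
  rwa [mul_neg_one] at h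

lemma FeSub_hasDerivAt {ε : ℝ} (hε : 0 < ε) (c t : ℝ) :
    HasDerivAt (fun s : ℝ => Fe ε (s - c)) (De ε (t - c)) t := by
  have h : HasDerivAt (fun s : ℝ => Fe ε (s - c)) (De ε (t - c) * 1) t :=
    by have := HasDerivAt.comp t (Fe_hasDerivAt hε (t - c)) ((hasDerivAt_id t).sub_const c); exact this
  rwa [mul_one] at h

lemma FeCSub_hasDerivAt {ε : ℝ} (hε : 0 < ε) (c t : ℝ) :
    HasDerivAt (fun s : ℝ => Fe ε (c - s)) (-De ε (c - t)) t := by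
  have h : HasDerivAt (fun s : ℝ => Fe ε (c - s)) (De ε (c - t) * (-1)) t :=
    HasDerivAt.comp t (Fe_hasDerivAt hε (c - t)) ((hasDerivAt_id t).const_sub c)
  rwa [mul_neg_one] at h

lemma abs_eq_max_add_max (t : ℝ) : |t| = max t 0 + max (-t) 0 := by
  rcases le_total t 0 with h | h
  · rw [abs_of_nonpos h, max_eq_right h, max_eq_left (by linarith : (0:ℝ) ≤ -t)]; ring
  · rw [abs_of_nonneg h, max_eq_left h, max_eq_right (by linarith : -t ≤ (0:ℝ))]; ring

lemma self_eq_max_sub_max (t : ℝ) : t = max t 0 - max (-t) 0 := by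
  rcases le_total t 0 with h | h
  · rw [max_eq_right h, max_eq_left (by linarith : (0:ℝ) ≤ -t)]; ring
  · rw [max_eq_left h, max_eq_right (by linarith : -t ≤ (0:ℝ))]; ring

lemma IsSobolevPair.congr_target {R : X →L[ℝ] X} {ν : Measure X} {p : ℝ≥0∞} {f : X → ℝ}
    {G G' : X → X} (h : IsSobolevPair R ν p f G) (hGG : ∀ x, G x = G' x) :
    IsSobolevPair R ν p f G' := by
  have hGeq : G = G' := funext hGG
  exact hGeq ▸ h

/-- Positive part, negative part and absolute value of a Sobolev function are Sobolev, with
`M_p(φ₊)=1_{φ>0}M_pφ`, `M_p(φ₋)=-1_{φ<0}M_pφ`, `M_p(|φ|)=sign(φ)M_pφ`; in particular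
`M_pφ` vanishes ν-a.e. on every level set `φ⁻¹(c)`. -/
theorem stmt7 (R : X →L[ℝ] X) (ν : Measure X) [IsProbabilityMeasure ν]
    (p : ℝ≥0∞) (hp : 1 < p) (hp' : p ≠ ∞)
    (hclos : ∀ G : X → X, IsSobolevPair R ν p (fun _ => 0) G → G =ᵐ[ν] fun _ => 0)
    (φ : X → ℝ) (G : X → X) (hφ : IsSobolevPair R ν p φ G) :
    IsSobolevPair R ν p (fun x => max (φ x) 0) (fun x => if 0 < φ x then G x else 0) ∧
    IsSobolevPair R ν p (fun x => max (-φ x) 0) (fun x => if φ x < 0 then -G x else 0) ∧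
    IsSobolevPair R ν p (fun x => |φ x|) (fun x => Real.sign (φ x) • G x) ∧
    ∀ c : ℝ, ∀ᵐ x ∂ν, φ x = c → G x = 0 := by
  set e : ℕ → ℝ := fun k => 1 / ((k : ℝ) + 1) with he_def
  have he : ∀ k, 0 < e k := fun k => by positivity
  have helim : Tendsto e atTop (𝓝 0) := tendsto_one_div_add_atTop_nhds_zero_nat
  -- Case A : positive part
  have caseA : IsSobolevPair R ν p (fun x => max (φ x) 0)
      (fun x => (if 0 < φ x then (1:ℝ) else 0) • G x) := by
    refine master R ν hp hp' hφ (fun k => Fe (e k)) (fun k => De (e k))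
      (fun t => max t 0) (fun t => if 0 < t then (1:ℝ) else 0) le_rfl e
      (fun k t => Fe_hasDerivAt (he k) t) (fun k => De_continuous (he k))
      (fun k t => De_abs_le (he k) t) ?_ (continuous_id.max continuous_const) ?_ helim
      (fun k t => Fe_approx (he k) t) (fun t => De_tendsto he helim)
    · intro t; show |if 0 < t then (1:ℝ) else 0| ≤ 1; split_ifs <;> norm_num
    · intro t; rw [one_mul, abs_of_nonneg (le_max_right t 0)]
      exact max_le (le_abs_self t) (abs_nonneg t)
  -- Case B : negative part
  have caseB : IsSobolevPair R ν p (fun x => max (-φ x) 0)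
      (fun x => (if φ x < 0 then (-1:ℝ) else 0) • G x) := by
    refine master R ν hp hp' hφ (fun k t => Fe (e k) (-t)) (fun k t => -De (e k) (-t))
      (fun t => max (-t) 0) (fun t => if t < 0 then (-1:ℝ) else 0) le_rfl e
      (fun k t => FeNeg_hasDerivAt (he k) t)
      (fun k => ((De_continuous (he k)).comp continuous_neg).neg)
      (fun k t => by rw [abs_neg]; exact De_abs_le (he k) (-t)) ?_
      ((continuous_id.neg.max continuous_const)) ?_ helim
      (fun k t => Fe_approx (he k) (-t)) ?_
    · intro t; show |if t < 0 then (-1:ℝ) else 0| ≤ 1; split_ifs <;> norm_num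
    · intro t; rw [one_mul, abs_of_nonneg (le_max_right (-t) 0)]
      exact max_le (by simpa using neg_le_abs t) (abs_nonneg t)
    · intro t
      have h1 := (De_tendsto (t := -t) he helim).neg
      have h2 : -(if 0 < -t then (1:ℝ) else 0) = if t < 0 then (-1:ℝ) else 0 := by
        simp only [neg_pos]; split_ifs <;> norm_num
      rwa [h2] at h1
  -- Case C : absolute value
  have caseC : IsSobolevPair R ν p (fun x => |φ x|) (fun x => Real.sign (φ x) • G x) := by
    refine master R ν hp hp' hφ (fun k t => Fe (e k) t + Fe (e k) (-t))
      (fun k t => De (e k) t - De (e k) (-t)) (fun t => |t|) Real.sign le_rfl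
      (fun k => 2 * e k) ?_ ?_ ?_ ?_ continuous_abs ?_ ?_ ?_ ?_
    · intro k t
      have h := (Fe_hasDerivAt (he k) t).add (FeNeg_hasDerivAt (he k) t)
      rwa [← sub_eq_add_neg] at h
    · exact fun k => (De_continuous (he k)).sub ((De_continuous (he k)).comp continuous_neg)
    · intro k t
      have h1 := De_nonneg (he k) t; have h2 := De_le_one (he k) t
      have h3 := De_nonneg (he k) (-t); have h4 := De_le_one (he k) (-t)
      show |De (e k) t - De (e k) (-t)| ≤ 1
      exact abs_le.2 ⟨by linarith, by linarith⟩
    · intro t; rcases Real.sign_apply_eq t with h | h | h <;> rw [h] <;> norm_num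
    · intro t; rw [one_mul, abs_abs]
    · have h := helim.const_mul (2:ℝ)
      rw [mul_zero] at h; exact h
    · intro k t
      have h1 := Fe_approx (he k) t
      have h2 := Fe_approx (he k) (-t)
      have hid : Fe (e k) t + Fe (e k) (-t) - |t|
          = (Fe (e k) t - max t 0) + (Fe (e k) (-t) - max (-t) 0) := by
        rw [abs_eq_max_add_max]; ring
      rw [hid]
      calc |(Fe (e k) t - max t 0) + (Fe (e k) (-t) - max (-t) 0)|
          ≤ |Fe (e k) t - max t 0| + |Fe (e k) (-t) - max (-t) 0| := abs_add_le _ _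
        _ ≤ 2 * e k := by linarith
    · intro t
      have h := (De_tendsto (t := t) he helim).sub (De_tendsto (t := -t) he helim)
      have h2 : (if 0 < t then (1:ℝ) else 0) - (if 0 < -t then (1:ℝ) else 0) = Real.sign t := by
        rcases lt_trichotomy t 0 with ht | rfl | ht
        · rw [Real.sign_of_neg ht, if_neg (by linarith), if_pos (by linarith)]; norm_num
        · rw [Real.sign_zero]; norm_num
        · rw [Real.sign_of_pos ht, if_pos ht, if_neg (by linarith)]; norm_num
      rwa [h2] at h
  -- Case D : level sets
  have caseD : ∀ c : ℝ, ∀ᵐ x ∂ν, φ x = c → G x = 0 := by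
    intro c
    have hzero : IsSobolevPair R ν p (fun _ => (0:ℝ))
        (fun x => (if φ x = c then (-1:ℝ) else 0) • G x) := by
      refine master R ν hp hp' hφ
        (fun k t => Fe (e k) (t - c) - Fe (e k) (c - t) - (t - c))
        (fun k t => De (e k) (t - c) + De (e k) (c - t) - 1)
        (fun _ => (0:ℝ)) (fun t => if t = c then (-1:ℝ) else 0) le_rfl
        (fun k => 2 * e k) ?_ ?_ ?_ ?_ continuous_const ?_ ?_ ?_ ?_
      · intro k t
        have h := ((FeSub_hasDerivAt (he k) c t).sub (FeCSub_hasDerivAt (he k) c t)).sub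
          ((hasDerivAt_id t).sub_const c)
        have hval : De (e k) (t - c) - -De (e k) (c - t) - 1
            = De (e k) (t - c) + De (e k) (c - t) - 1 := by ring
        rwa [hval] at h
      · intro k
        exact (((De_continuous (he k)).comp (continuous_id.sub continuous_const)).add
          ((De_continuous (he k)).comp (continuous_const.sub continuous_id))).sub
          continuous_const
      · intro k t
        have h1 := De_nonneg (he k) (t - c); have h2 := De_le_one (he k) (t - c)
        have h3 := De_nonneg (he k) (c - t); have h4 := De_le_one (he k) (c - t)
        have h5 : min (De (e k) (t - c)) (De (e k) (c - t)) = 0 := by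
          rcases le_total t c with h | h
          · have : max (t - c) 0 = 0 := max_eq_right (by linarith)
            have hz : De (e k) (t - c) = 0 := by simp [De, this]
            rw [hz]; exact min_eq_left h3
          · have : max (c - t) 0 = 0 := max_eq_right (by linarith)
            have hz : De (e k) (c - t) = 0 := by simp [De, this]
            rw [hz]; exact min_eq_right h1
        have h6 := min_le_left (De (e k) (t - c)) (De (e k) (c - t))
        have h7 := min_le_right (De (e k) (t - c)) (De (e k) (c - t))
        show |De (e k) (t - c) + De (e k) (c - t) - 1| ≤ 1
        exact abs_le.2 ⟨by linarith, by linarith⟩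
      · intro t; show |if t = c then (-1:ℝ) else 0| ≤ 1; split_ifs <;> norm_num
      · intro t; show |(0:ℝ)| ≤ 1 * |t|; simp [abs_nonneg]
      · have h := helim.const_mul (2:ℝ)
        rw [mul_zero] at h; exact h
      · intro k t
        have h1 := Fe_approx (he k) (t - c)
        have h2 := Fe_approx (he k) (c - t)
        have hid : Fe (e k) (t - c) - Fe (e k) (c - t) - (t - c) - 0
            = (Fe (e k) (t - c) - max (t - c) 0) - (Fe (e k) (c - t) - max (c - t) 0) := by
          have := self_eq_max_sub_max (t - c)
          have hneg : -(t - c) = c - t := by ring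
          rw [hneg] at this
          linarith
        rw [hid]
        calc |(Fe (e k) (t - c) - max (t - c) 0) - (Fe (e k) (c - t) - max (c - t) 0)|
            ≤ |Fe (e k) (t - c) - max (t - c) 0| + |Fe (e k) (c - t) - max (c - t) 0| := by
              simpa [Real.norm_eq_abs] using norm_sub_le (Fe (e k) (t - c) - max (t - c) 0)
                (Fe (e k) (c - t) - max (c - t) 0)
          _ ≤ 2 * e k := by linarith
      · intro t
        have h := ((De_tendsto (t := t - c) he helim).add
          (De_tendsto (t := c - t) he helim)).sub_const 1
        have h2 : (if 0 < t - c then (1:ℝ) else 0) + (if 0 < c - t then (1:ℝ) else 0) - 1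
            = if t = c then (-1:ℝ) else 0 := by
          rcases lt_trichotomy t c with ht | rfl | ht
          · rw [if_neg (by linarith), if_pos (by linarith), if_neg ht.ne]; norm_num
          · norm_num
          · rw [if_pos (by linarith), if_neg (by linarith), if_neg ht.ne']; norm_num
        rwa [h2] at h
    have hae := hclos _ hzero
    filter_upwards [hae] with x hx hxc
    rw [if_pos hxc] at hx
    simpa [neg_eq_zero] using hx
  refine ⟨caseA.congr_target fun x => ?_, caseB.congr_target fun x => ?_, caseC, caseD⟩
  · split_ifs <;> simp
  · split_ifs <;> simp
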